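/- Let ι be a finite index set, let k > 0 and ε > 0 with γ = k/ε² < 1, let m : ι → ℝ satisfy m(i) > 0 for all i, let A be a symmetric positive semidefinite real matrix indexed by ι, and let u : ι → ℝ satisfy |u(i)| ≤ 1 for all i. Define ℓ(v) = (1/k)Σ_i m(i)v(i)² + vᵀAv + (1/ε²)Σ_i m(i)(3u(i)² − 1)v(i)² and b(v) = ((1 − γ)/k)Σ_i m(i)v(i)² + vᵀAv. Then for every v : ι → ℝ, b(v) ≤ ℓ(v) ≤ ((1 + 2γ)/(1 − γ)) b(v). In particular the generalized condition number of the preconditioned operator B·L, with B the inverse of the operator represented by b, is at most (1 + 2γ)/(1 − γ). -/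

import Mathlib

open Finset Matrix

/-- Theorem 3.4 in nodal (matrix) form: spectral equivalence between the Newton
linearization `ℓ` and the Poisson-like preconditioner form `b`, giving
`κ(B·L) ≤ (1 + 2γ)/(1 − γ)`. -/
theorem stmt_12 (ι : Type*) [Fintype ι] [DecidableEq ι]
    (k ε γ : ℝ) (hk : 0 < k) (hε : 0 < ε) (hγ : γ = k / ε ^ 2) (hγ1 : γ < 1)
    (m : ι → ℝ) (hm : ∀ i, 0 < m i)
    (A : Matrix ι ι ℝ) (hA : A.PosSemidef)
    (u : ι → ℝ) (hu : ∀ i, |u i| ≤ 1)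
    (ℓ b : (ι → ℝ) → ℝ)
    (hℓ : ∀ v, ℓ v = 1 / k * (∑ i, m i * (v i) ^ 2) + v ⬝ᵥ (A *ᵥ v)
      + 1 / ε ^ 2 * (∑ i, m i * (3 * (u i) ^ 2 - 1) * (v i) ^ 2))
    (hb : ∀ v, b v = (1 - γ) / k * (∑ i, m i * (v i) ^ 2) + v ⬝ᵥ (A *ᵥ v)) :
    ∀ v : ι → ℝ, b v ≤ ℓ v ∧ ℓ v ≤ (1 + 2 * γ) / (1 - γ) * b v := by
  intro v
  set S : ℝ := ∑ i, m i * (v i) ^ 2 with hSdef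
  set T : ℝ := ∑ i, m i * (u i) ^ 2 * (v i) ^ 2 with hTdef
  set Q : ℝ := v ⬝ᵥ (A *ᵥ v) with hQdef
  have hQ0 : 0 ≤ Q := by
    have := hA.dotProduct_mulVec_nonneg v
    simpa [hQdef] using this
  have hT0 : 0 ≤ T := Finset.sum_nonneg fun i _ =>
    mul_nonneg (mul_nonneg (hm i).le (sq_nonneg _)) (sq_nonneg _)
  have hTS : T ≤ S := by
    apply Finset.sum_le_sum
    intro i _
    have h1 : (u i) ^ 2 ≤ 1 := by
      have := hu i
      nlinarith [abs_nonneg (u i), sq_abs (u i)]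
    nlinarith [mul_nonneg (mul_nonneg (hm i).le (sq_nonneg (v i))) (sub_nonneg.mpr h1)]
  have hγ0 : 0 < γ := by rw [hγ]; positivity
  have hε2 : (1 : ℝ) / ε ^ 2 = γ / k := by
    rw [hγ]; field_simp
  have hsum : ∑ i, m i * (3 * (u i) ^ 2 - 1) * (v i) ^ 2 = 3 * T - S := by
    rw [hTdef, hSdef, Finset.mul_sum, ← Finset.sum_sub_distrib]
    exact Finset.sum_congr rfl fun i _ => by ring
  have hℓv : ℓ v = 1 / k * S + Q + γ / k * (3 * T - S) := by
    rw [hℓ, hsum, hε2]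
  have hbv : b v = (1 - γ) / k * S + Q := by rw [hb]
  constructor
  · rw [hℓv, hbv]
    have : 0 ≤ γ / k * (3 * T) := by positivity
    have hk' : (0:ℝ) < k := hk
    have : (1 - γ) / k * S + Q + γ / k * (3 * T) = 1 / k * S + Q + γ / k * (3 * T - S) + (γ/k) * S - (γ/k)*S := by
      field_simp; ring
    nlinarith [mul_nonneg (div_nonneg hγ0.le hk.le) hT0]
  · have h1γ : (0:ℝ) < 1 - γ := by linarith
    have hkℓ : k * ℓ v = S + k * Q + γ * (3 * T - S) := by
      rw [hℓv]; field_simp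
    have hkb : k * b v = (1 - γ) * S + k * Q := by
      rw [hbv]; field_simp
    rw [show (1 + 2 * γ) / (1 - γ) * b v
      = ((1 + 2 * γ) * b v) / (1 - γ) by ring, le_div_iff₀ h1γ,
      ← mul_le_mul_iff_right₀ hk]
    nlinarith [hkℓ, hkb, mul_nonneg (mul_nonneg hγ0.le h1γ.le)
      (sub_nonneg.mpr hTS), mul_nonneg hγ0.le (mul_nonneg hk.le hQ0)]
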